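/- Let (X,μ) be a good Cantor measure space and I an invariant ideal on X with μ-measurable base. If I contains a set of positive μ-measure, then I contains every nowhere dense subset of X. -/

import Mathlib

open MeasureTheory Set Topology

set_option linter.unusedSectionVars false
set_option linter.unusedVariables false

noncomputable section

namespace Stmt12Aux

variable {X : Type*} [MetricSpace X] [CompactSpace X]
  [TotallyDisconnectedSpace X]
  [MeasurableSpace X] [BorelSpace X]

def lunion (L : List (Set X)) : Set X := L.foldr (· ∪ ·) ∅

@[simp] lemma lunion_nil : lunion ([] : List (Set X)) = ∅ := rfl
@[simp] lemma lunion_cons (s : Set X) (L : List (Set X)) :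
    lunion (s :: L) = s ∪ lunion L := rfl

lemma mem_lunion {L : List (Set X)} {x : X} : x ∈ lunion L ↔ ∃ s ∈ L, x ∈ s := by
  induction L with
  | nil => simp [lunion]
  | cons a L ih => simp [lunion_cons, ih]

lemma lunion_subset {L : List (Set X)} {V : Set X} (h : ∀ s ∈ L, s ⊆ V) :
    lunion L ⊆ V := by
  intro x hx
  rcases mem_lunion.1 hx with ⟨s, hs, hxs⟩
  exact h s hs hxs

lemma subset_lunion {L : List (Set X)} {s : Set X} (h : s ∈ L) : s ⊆ lunion L :=
  fun x hx => mem_lunion.2 ⟨s, h, hx⟩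

lemma isClopen_lunion {L : List (Set X)} (h : ∀ s ∈ L, IsClopen s) :
    IsClopen (lunion L) := by
  induction L with
  | nil => simpa [lunion] using isClopen_empty
  | cons a L ih =>
    rw [lunion_cons]
    exact (h a (by simp)).union (ih fun s hs => h s (by simp [hs]))

def Small (δ : ℝ) (s : Set X) : Prop := ∀ y ∈ s, ∀ z ∈ s, dist y z ≤ δ

lemma Small.mono {δ : ℝ} {s t : Set X} (h : Small δ t) (hst : s ⊆ t) : Small δ s :=
  fun y hy z hz => h y (hst hy) z (hst hz)

variable (μ : Measure X) [IsFiniteMeasure μ]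

def ν (s : Set X) : ℝ := (μ s).toReal

lemma ν_nonneg (s : Set X) : 0 ≤ ν μ s := ENNReal.toReal_nonneg

@[simp] lemma ν_empty : ν μ (∅ : Set X) = 0 := by simp [ν]

lemma ν_mono {s t : Set X} (h : s ⊆ t) : ν μ s ≤ ν μ t :=
  ENNReal.toReal_mono (measure_ne_top μ t) (measure_mono h)

lemma ν_union {s t : Set X} (hd : Disjoint s t) (ht : MeasurableSet t) :
    ν μ (s ∪ t) = ν μ s + ν μ t := by
  rw [ν, measure_union hd ht, ENNReal.toReal_add (measure_ne_top μ s) (measure_ne_top μ t)]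
  rfl

lemma ν_diff {s t : Set X} (h : t ⊆ s) (ht : MeasurableSet t) :
    ν μ (s \ t) = ν μ s - ν μ t := by
  rw [ν, measure_diff h ht.nullMeasurableSet (measure_ne_top μ t),
    ENNReal.toReal_sub_of_le (measure_mono h) (measure_ne_top μ s)]
  rfl

lemma mu_eq_of_ν_eq {s t : Set X} (h : ν μ s = ν μ t) : μ s = μ t :=
  (ENNReal.toReal_eq_toReal_iff' (measure_ne_top μ s) (measure_ne_top μ t)).1 h

lemma ν_lt_ν_of_mu {s t : Set X} (h : ν μ s < ν μ t) : μ s < μ t :=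
  (ENNReal.toReal_lt_toReal (measure_ne_top μ s) (measure_ne_top μ t)).1 h

lemma ν_strict_pos (hpos : ∀ U : Set X, IsOpen U → U.Nonempty → 0 < μ U)
    {s : Set X} (hs : IsOpen s) (hne : s.Nonempty) : 0 < ν μ s := by
  have := hpos s hs hne
  rw [ν, ENNReal.toReal_pos_iff]
  exact ⟨this, (measure_ne_top μ s).lt_top⟩

lemma nonempty_of_ν_pos {s : Set X} (h : 0 < ν μ s) : s.Nonempty := by
  rcases s.eq_empty_or_nonempty with rfl | hne
  · simp at h
  · exact hne

lemma empty_of_ν_zero (hpos : ∀ U : Set X, IsOpen U → U.Nonempty → 0 < μ U)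
    {s : Set X} (hs : IsOpen s) (h : ν μ s ≤ 0) : s = ∅ := by
  rcases s.eq_empty_or_nonempty with rfl | hne
  · rfl
  · exact absurd (ν_strict_pos μ hpos hs hne) (not_lt.2 h)

/-- additivity over a pairwise-disjoint list of clopen sets, intersected with a
measurable set `A` -/
lemma ν_inter_lunion {A : Set X} (hA : MeasurableSet A) :
    ∀ (L : List (Set X)), (∀ s ∈ L, IsClopen s) → L.Pairwise Disjoint →
    ν μ (A ∩ lunion L) = (L.map (fun s => ν μ (A ∩ s))).sum := by
  intro L
  induction L with
  | nil => simp
  | cons B L ih =>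
    intro hcl hdisj
    have hBm : MeasurableSet (A ∩ B) := hA.inter (hcl B (by simp)).1.measurableSet
    have hd : Disjoint (A ∩ B) (A ∩ lunion L) := by
      have : Disjoint B (lunion L) := by
        apply Set.disjoint_left.2
        intro x hxB hxL
        rcases mem_lunion.1 hxL with ⟨s, hs, hxs⟩
        exact Set.disjoint_left.1 ((List.pairwise_cons.1 hdisj).1 s hs) hxB hxs
      exact this.mono inter_subset_right inter_subset_right
    have hLm : MeasurableSet (A ∩ lunion L) :=
      hA.inter ((isClopen_lunion (X := X) (L := L) (fun s hs => hcl s (by simp [hs]))).1.measurableSet)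
    rw [lunion_cons, Set.inter_union_distrib_left, ν_union μ hd hLm,
      ih (fun s hs => hcl s (by simp [hs])) (List.pairwise_cons.1 hdisj).2]
    simp

lemma ν_lunion (L : List (Set X)) (hcl : ∀ s ∈ L, IsClopen s) (hdisj : L.Pairwise Disjoint) :
    ν μ (lunion L) = (L.map (ν μ)).sum := by
  have := ν_inter_lunion μ MeasurableSet.univ L hcl hdisj
  simpa using this

/-- a clopen cover of a closed set inside an open set, with small excess measure -/
lemma clopen_cover {C U : Set X} (hC : IsClosed C) (hU : IsOpen U) (hCU : C ⊆ U)
    {ε : ℝ} (hε : 0 < ε) :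
    ∃ D : Set X, IsClopen D ∧ C ⊆ D ∧ D ⊆ U ∧ ν μ D < ν μ C + ε := by
  obtain ⟨O, hCO, hOopen, hOμ⟩ :=
    Set.exists_isOpen_lt_add C (measure_ne_top μ C) (ε := ENNReal.ofReal ε)
      (ENNReal.ofReal_pos.2 hε).ne'
  set O' := O ∩ U with hO'def
  have hO'open : IsOpen O' := hOopen.inter hU
  have hCO' : C ⊆ O' := subset_inter hCO hCU
  have hex : ∀ x : C, ∃ B : Set X, IsClopen B ∧ (x : X) ∈ B ∧ B ⊆ O' := by
    intro x
    obtain ⟨B, hB, hxB, hBO⟩ :=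
      isTopologicalBasis_isClopen.exists_subset_of_mem_open (hCO' x.2) hO'open
    exact ⟨B, hB, hxB, hBO⟩
  choose B hB1 hB2 hB3 using hex
  have hcover : C ⊆ ⋃ x : C, B x := fun x hx => mem_iUnion.2 ⟨⟨x, hx⟩, hB2 ⟨x, hx⟩⟩
  obtain ⟨t, ht⟩ := (hC.isCompact).elim_finite_subcover B (fun x => (hB1 x).2) hcover
  refine ⟨⋃ x ∈ t, B x, isClopen_biUnion_finset (fun x _ => hB1 x), ht, ?_, ?_⟩
  · exact iUnion₂_subset fun x _ => (hB3 x).trans inter_subset_right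
  · have hsub : (⋃ x ∈ t, B x) ⊆ O := iUnion₂_subset fun x _ => (hB3 x).trans inter_subset_left
    have : μ (⋃ x ∈ t, B x) < μ C + ENNReal.ofReal ε := lt_of_le_of_lt (measure_mono hsub) hOμ
    have h2 := ENNReal.toReal_lt_toReal (measure_ne_top μ _)
      (by finiteness : μ C + ENNReal.ofReal ε ≠ ⊤) |>.2 this
    rwa [ENNReal.toReal_add (measure_ne_top μ C) ENNReal.ofReal_ne_top,
      ENNReal.toReal_ofReal hε.le] at h2

/-! ### disjointify and drop empties -/

def djf : List (Set X) → List (Set X)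
  | [] => []
  | s :: l => s :: (djf l).map (· \ s)

lemma djf_subset : ∀ (l : List (Set X)), ∀ p ∈ djf l, ∃ s ∈ l, p ⊆ s := by
  intro l
  induction l with
  | nil => intro p hp; simp [djf] at hp
  | cons s l ih =>
    intro p hp
    rcases List.mem_cons.1 hp with rfl | hp
    · exact ⟨p, by simp, subset_rfl⟩
    · rcases List.mem_map.1 hp with ⟨q, hq, rfl⟩
      rcases ih q hq with ⟨t, ht, hqt⟩
      exact ⟨t, by simp [ht], diff_subset.trans hqt⟩

lemma lunion_map_diff (s : Set X) : ∀ (l : List (Set X)),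
    lunion (l.map (· \ s)) = lunion l \ s := by
  intro l
  induction l with
  | nil => simp
  | cons a l ih => simp [ih, Set.union_diff_distrib]

lemma lunion_djf : ∀ (l : List (Set X)), lunion (djf l) = lunion l := by
  intro l
  induction l with
  | nil => rfl
  | cons s l ih =>
    show lunion (s :: (djf l).map (· \ s)) = s ∪ lunion l
    rw [lunion_cons, lunion_map_diff, ih, Set.union_diff_self]

lemma djf_pairwise : ∀ (l : List (Set X)), (djf l).Pairwise Disjoint := by
  intro l
  induction l with
  | nil => simp [djf]
  | cons s l ih =>
    show (s :: (djf l).map (· \ s)).Pairwise Disjoint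
    rw [List.pairwise_cons]
    constructor
    · intro p hp
      rcases List.mem_map.1 hp with ⟨q, hq, rfl⟩
      exact Set.disjoint_left.2 (fun x hx hx2 => hx2.2 hx)
    · rw [List.pairwise_map]
      exact ih.imp (fun h => h.mono diff_subset diff_subset)

lemma djf_clopen : ∀ (l : List (Set X)), (∀ s ∈ l, IsClopen s) → ∀ p ∈ djf l, IsClopen p := by
  intro l
  induction l with
  | nil => intro _ p hp; simp [djf] at hp
  | cons s l ih =>
    intro hcl p hp
    rcases List.mem_cons.1 hp with rfl | hp
    · exact hcl p (by simp)
    · rcases List.mem_map.1 hp with ⟨q, hq, rfl⟩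
      exact (ih (fun t ht => hcl t (by simp [ht])) q hq).diff (hcl s (by simp))

open scoped Classical in
def dropE : List (Set X) → List (Set X)
  | [] => []
  | s :: l => if s = ∅ then dropE l else s :: dropE l

lemma dropE_sublist : ∀ (l : List (Set X)), (dropE l).Sublist l := by
  intro l
  induction l with
  | nil => simp [dropE]
  | cons s l ih =>
    rw [dropE]
    split
    · exact ih.cons s
    · exact ih.cons₂ s

lemma mem_dropE : ∀ (l : List (Set X)) (p : Set X), p ∈ dropE l ↔ p ∈ l ∧ p ≠ ∅ := by
  intro l
  induction l with
  | nil => simp [dropE]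
  | cons s l ih =>
    intro p
    rw [dropE]
    split
    · rename_i hs
      subst hs
      rw [ih]
      constructor
      · rintro ⟨h1, h2⟩; exact ⟨by simp [h1], h2⟩
      · rintro ⟨h1, h2⟩
        rcases List.mem_cons.1 h1 with rfl | h1
        · exact absurd rfl h2
        · exact ⟨h1, h2⟩
    · rename_i hs
      constructor
      · intro h
        rcases List.mem_cons.1 h with rfl | h
        · exact ⟨by simp, hs⟩
        · exact ⟨by simp [(ih p).1 h |>.1], ((ih p).1 h).2⟩
      · rintro ⟨h1, h2⟩
        rcases List.mem_cons.1 h1 with rfl | h1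
        · simp
        · exact List.mem_cons.2 (Or.inr ((ih p).2 ⟨h1, h2⟩))

lemma lunion_dropE : ∀ (l : List (Set X)), lunion (dropE l) = lunion l := by
  intro l
  induction l with
  | nil => rfl
  | cons s l ih =>
    rw [dropE]
    split
    · rename_i hs; subst hs; simp [ih]
    · rw [lunion_cons, lunion_cons, ih]

lemma dropE_pairwise {l : List (Set X)} (h : l.Pairwise Disjoint) :
    (dropE l).Pairwise Disjoint := h.sublist (dropE_sublist l)

/-- fine partitions of a clopen set into nonempty clopen pieces of small diameter
and small measure -/
lemma fine_partition (μ : Measure X) [IsFiniteMeasure μ]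
    (hcont : ∀ x : X, μ {x} = 0)
    {V : Set X} (hV : IsClopen V) {δ ε : ℝ} (hδ : 0 < δ) (hε : 0 < ε) :
    ∃ L : List (Set X),
      (∀ p ∈ L, IsClopen p ∧ p.Nonempty ∧ p ⊆ V ∧ Small δ p ∧ ν μ p < ε) ∧
      L.Pairwise Disjoint ∧ lunion L = V := by
  have hex : ∀ x : V, ∃ B : Set X, IsClopen B ∧ (x : X) ∈ B ∧ B ⊆ V ∧
      Small δ B ∧ ν μ B < ε := by
    intro x
    obtain ⟨O, hxO, hOopen, hOμ⟩ :=
      Set.exists_isOpen_lt_add {(x : X)} (measure_ne_top μ _) (ε := ENNReal.ofReal ε)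
        (ENNReal.ofReal_pos.2 hε).ne'
    rw [hcont, zero_add] at hOμ
    have hW : IsOpen (O ∩ (Metric.ball (x : X) (δ/2) ∩ V)) :=
      hOopen.inter ((Metric.isOpen_ball).inter hV.2)
    have hxW : (x : X) ∈ O ∩ (Metric.ball (x : X) (δ/2) ∩ V) :=
      ⟨hxO rfl, Metric.mem_ball_self (by linarith), x.2⟩
    obtain ⟨B, hB, hxB, hBW⟩ :=
      isTopologicalBasis_isClopen.exists_subset_of_mem_open hxW hW
    refine ⟨B, hB, hxB, fun y hy => (hBW hy).2.2, ?_, ?_⟩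
    · intro y hy z hz
      have h1 := Metric.mem_ball.1 (hBW hy).2.1
      have h2 := Metric.mem_ball.1 (hBW hz).2.1
      calc dist y z ≤ dist y (x : X) + dist (x : X) z := dist_triangle _ _ _
        _ ≤ δ := by rw [dist_comm (x : X) z] at *; linarith
    · have : μ B < ENNReal.ofReal ε :=
        lt_of_le_of_lt (measure_mono (hBW.trans inter_subset_left)) hOμ
      have := ENNReal.toReal_lt_toReal (measure_ne_top μ B) ENNReal.ofReal_ne_top |>.2 this
      rwa [ENNReal.toReal_ofReal hε.le] at this
  choose B hB1 hB2 hB3 hB4 hB5 using hex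
  have hcover : V ⊆ ⋃ x : V, B x := fun x hx => mem_iUnion.2 ⟨⟨x, hx⟩, hB2 ⟨x, hx⟩⟩
  obtain ⟨t, ht⟩ := (hV.1.isCompact).elim_finite_subcover B (fun x => (hB1 x).2) hcover
  set L0 : List (Set X) := t.toList.map B with hL0
  have hL0mem : ∀ p ∈ L0, IsClopen p ∧ p ⊆ V ∧ Small δ p ∧ ν μ p < ε := by
    intro p hp
    rcases List.mem_map.1 hp with ⟨x, hx, rfl⟩
    exact ⟨hB1 x, hB3 x, hB4 x, hB5 x⟩
  have hL0union : lunion L0 = V := by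
    apply Set.Subset.antisymm
    · exact lunion_subset (fun s hs => (hL0mem s hs).2.1)
    · intro x hx
      rcases mem_iUnion₂.1 (ht hx) with ⟨y, hy1, hy2⟩
      exact mem_lunion.2 ⟨B y, List.mem_map.2 ⟨y, Finset.mem_toList.2 hy1, rfl⟩, hy2⟩
  refine ⟨dropE (djf L0), ?_, dropE_pairwise (djf_pairwise L0), ?_⟩
  · intro p hp
    obtain ⟨hp1, hp2⟩ := (mem_dropE _ p).1 hp
    obtain ⟨s, hs, hps⟩ := djf_subset L0 p hp1
    obtain ⟨hs1, hs2, hs3, hs4⟩ := hL0mem s hs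
    exact ⟨djf_clopen L0 (fun q hq => (hL0mem q hq).1) p hp1,
      Set.nonempty_iff_ne_empty.2 hp2, hps.trans hs2, hs3.mono hps,
      lt_of_le_of_lt (ν_mono μ hps) hs4⟩
  · rw [lunion_dropE, lunion_djf, hL0union]

/-! ### consequences of the subset condition -/

variable (μ : Measure X) [IsFiniteMeasure μ]

/-- there is a clopen set of measure `ν V - ν U` -/
lemma exists_clopen_of_diff
    (hsc : ∀ U V : Set X, IsClopen U → IsClopen V → μ U < μ V →
      ∃ W, W ⊆ V ∧ IsClopen W ∧ μ W = μ U)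
    {U V : Set X} (hU : IsClopen U) (hV : IsClopen V) (h : ν μ U ≤ ν μ V) :
    ∃ D, IsClopen D ∧ ν μ D = ν μ V - ν μ U := by
  rcases eq_or_lt_of_le h with heq | hlt
  · exact ⟨∅, isClopen_empty, by simp [← heq]⟩
  · obtain ⟨W, hWV, hWcl, hWμ⟩ := hsc U V hU hV (ν_lt_ν_of_mu μ hlt)
    refine ⟨V \ W, hV.diff hWcl, ?_⟩
    rw [ν_diff μ hWV hWcl.1.measurableSet]
    congr 1
    exact (ENNReal.toReal_eq_toReal_iff' (measure_ne_top μ W) (measure_ne_top μ U)).2 hWμ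

/-- the sandwich lemma: find a clopen set of exactly the measure of a given witness,
squeezed between a clopen set and a clopen superset. -/
lemma sandwich
    (hsc : ∀ U V : Set X, IsClopen U → IsClopen V → μ U < μ V →
      ∃ W, W ⊆ V ∧ IsClopen W ∧ μ W = μ U)
    {E R T : Set X} (hE : IsClopen E) (hR : IsClopen R) (hT : IsClopen T)
    (hER : E ⊆ R) (h1 : ν μ E ≤ ν μ T) (h2 : ν μ T ≤ ν μ R) :
    ∃ W, IsClopen W ∧ E ⊆ W ∧ W ⊆ R ∧ ν μ W = ν μ T := by
  rcases eq_or_lt_of_le h1 with heq1 | hlt1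
  · exact ⟨E, hE, subset_rfl, hER, heq1.symm ▸ rfl⟩
  rcases eq_or_lt_of_le h2 with heq2 | hlt2
  · exact ⟨R, hR, hER, subset_rfl, heq2.symm⟩
  obtain ⟨E', hE'T, hE'cl, hE'μ⟩ := hsc E T hE hT (ν_lt_ν_of_mu μ hlt1)
  have hE'ν : ν μ E' = ν μ E :=
    (ENNReal.toReal_eq_toReal_iff' (measure_ne_top μ E') (measure_ne_top μ E)).2 hE'μ
  set D := T \ E' with hD
  have hDcl : IsClopen D := hT.diff hE'cl
  have hDν : ν μ D = ν μ T - ν μ E := by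
    rw [hD, ν_diff μ hE'T hE'cl.1.measurableSet, hE'ν]
  have hREν : ν μ (R \ E) = ν μ R - ν μ E := ν_diff μ hER hE.1.measurableSet
  have hlt : μ D < μ (R \ E) := by
    apply ν_lt_ν_of_mu
    rw [hDν, hREν]; linarith
  obtain ⟨Z, hZsub, hZcl, hZμ⟩ := hsc D (R \ E) hDcl (hR.diff hE) hlt
  have hZν : ν μ Z = ν μ D :=
    (ENNReal.toReal_eq_toReal_iff' (measure_ne_top μ Z) (measure_ne_top μ D)).2 hZμ
  refine ⟨E ∪ Z, hE.union hZcl, subset_union_left, ?_, ?_⟩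
  · exact union_subset hER (hZsub.trans diff_subset)
  · have hd : Disjoint E Z := by
      apply Set.disjoint_left.2
      intro x hx hx2
      exact (hZsub hx2).2 hx
    rw [ν_union μ hd hZcl.1.measurableSet, hZν, hDν]; ring

/-! ### the grab lemma -/

lemma prefix_select (f : Set X → ℝ) :
    ∀ (l : List (Set X)) (t : ℝ), 0 ≤ t → ∀ δ : ℝ, 0 < δ →
    (∀ s ∈ l, 0 ≤ f s ∧ f s < δ) → t < (l.map f).sum →
    ∃ l₁ l₂ : List (Set X), l = l₁ ++ l₂ ∧ t < (l₁.map f).sum ∧ (l₁.map f).sum ≤ t + δ := by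
  intro l
  induction l with
  | nil => intro t ht δ hδ hf hsum; simp at hsum; linarith
  | cons s l ih =>
    intro t ht δ hδ hf hsum
    by_cases hc : t < f s
    · refine ⟨[s], l, by simp, by simpa using hc, ?_⟩
      have := (hf s (by simp)).2
      simp only [List.map_cons, List.map_nil, List.sum_cons, List.sum_nil, add_zero]
      linarith
    · push_neg at hc
      have hsum' : t - f s < (l.map f).sum := by
        simp only [List.map_cons, List.sum_cons] at hsum; linarith
      obtain ⟨l₁, l₂, heq, h1, h2⟩ := ih (t - f s) (by linarith) δ hδ
        (fun q hq => hf q (by simp [hq])) hsum'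
      refine ⟨s :: l₁, l₂, by simp [heq], ?_, ?_⟩ <;>
        simp only [List.map_cons, List.sum_cons] <;> linarith

/-- Grab a clopen piece `E` of `V` capturing an amount of the closed set `G` in the
window `(t, t+δ]`, with `E` tight around its part of `G`; `W` is a clopen set
containing the rest of `G ∩ V`, disjoint from `E`. -/
lemma grab (hcont : ∀ x : X, μ {x} = 0)
    {V : Set X} (hV : IsClopen V) {G : Set X} (hG : IsClosed G)
    {t δ : ℝ} (ht0 : 0 ≤ t) (hδ : 0 < δ) (htG : t < ν μ (G ∩ V)) :
    ∃ E W : Set X, IsClopen E ∧ IsClopen W ∧ E ⊆ V ∧ W ⊆ V ∧ Disjoint E W ∧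
      G ∩ V ⊆ E ∪ W ∧ t < ν μ (G ∩ E) ∧ ν μ (G ∩ E) ≤ t + δ ∧
      ν μ E ≤ ν μ (G ∩ E) + δ := by
  obtain ⟨L, hLmem, hLdisj, hLun⟩ := fine_partition μ hcont hV (δ := 1) (ε := δ/2)
    one_pos (by linarith)
  have hmass : t < (L.map (fun s => ν μ (G ∩ s))).sum := by
    rw [← ν_inter_lunion μ hG.measurableSet L (fun s hs => (hLmem s hs).1) hLdisj, hLun]
    exact htG
  obtain ⟨l₁, l₂, hsplit, h1, h2⟩ := prefix_select (fun s => ν μ (G ∩ s)) L t ht0 (δ/2)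
    (by linarith)
    (fun s hs => ⟨ν_nonneg μ _, lt_of_le_of_lt (ν_mono μ inter_subset_right) (hLmem s hs).2.2.2.2⟩)
    hmass
  have hl₁mem : ∀ s ∈ l₁, IsClopen s ∧ s ⊆ V := by
    intro s hs
    have : s ∈ L := by rw [hsplit]; exact List.mem_append_left _ hs
    exact ⟨(hLmem s this).1, (hLmem s this).2.2.1⟩
  have hl₁cl : IsClopen (lunion l₁) := isClopen_lunion (fun s hs => (hl₁mem s hs).1)
  have hl₁disj : l₁.Pairwise Disjoint := by
    rw [hsplit] at hLdisj
    exact (List.pairwise_append.1 hLdisj).1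
  have hGl₁ : ν μ (G ∩ lunion l₁) = (l₁.map (fun s => ν μ (G ∩ s))).sum :=
    ν_inter_lunion μ hG.measurableSet l₁ (fun s hs => (hl₁mem s hs).1) hl₁disj
  obtain ⟨E, hEcl, hGE, hEsub, hEν⟩ := clopen_cover μ (hG.inter hl₁cl.1)
    hl₁cl.2 inter_subset_right hδ
  have hGEeq : G ∩ E = G ∩ lunion l₁ := by
    apply Set.Subset.antisymm
    · exact inter_subset_inter_right G hEsub
    · intro x hx; exact ⟨hx.1, hGE hx⟩
  refine ⟨E, V \ lunion l₁, hEcl, hV.diff hl₁cl,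
    hEsub.trans (lunion_subset (fun s hs => (hl₁mem s hs).2)), diff_subset, ?_, ?_, ?_, ?_, ?_⟩
  · exact Set.disjoint_left.2 (fun x hx hx2 => hx2.2 (hEsub hx))
  · intro x hx
    by_cases hxl : x ∈ lunion l₁
    · exact Or.inl (hGE ⟨hx.1, hxl⟩)
    · exact Or.inr ⟨hx.2, hxl⟩
  · rw [hGEeq, hGl₁]; exact h1
  · rw [hGEeq, hGl₁]; linarith
  · rw [hGEeq]; linarith

lemma map_sum_nonneg {f : Set X → ℝ} : ∀ {L : List (Set X)}, (∀ s ∈ L, 0 ≤ f s) →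
    0 ≤ (L.map f).sum := by
  intro L
  induction L with
  | nil => simp
  | cons a L ih =>
    intro h
    simp only [List.map_cons, List.sum_cons]
    have := h a (by simp)
    have := ih (fun s hs => h s (by simp [hs]))
    linarith

/-- The F-distribution engine: given a prospective partition `L` of the partner side and
a clopen cover `C ⊆ V` of `F ∩ V` controlled by the `K`-budgets of `L`, partition `V`
into clopen pieces matching the measures of `L`, respecting the invariant. -/
lemma carveF
    (hpos : ∀ U : Set X, IsOpen U → U.Nonempty → 0 < μ U)
    (hcont : ∀ x : X, μ {x} = 0)
    (hsc : ∀ U V : Set X, IsClopen U → IsClopen V → μ U < μ V →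
      ∃ W, W ⊆ V ∧ IsClopen W ∧ μ W = μ U)
    {F K : Set X} (hF : IsClosed F) (hK : IsClosed K) :
    ∀ (L : List (Set X)) (V C : Set X),
      IsClopen V → IsClopen C → C ⊆ V → F ∩ V ⊆ C →
      (∀ P ∈ L, IsClopen P) → L.Pairwise Disjoint →
      ν μ V = (L.map (ν μ)).sum →
      (C = ∅ ∨ ν μ C < (L.map (fun P => ν μ (K ∩ P))).sum) →
      ∃ R : List (Set X), R.length = L.length ∧
        (∀ Q ∈ R, IsClopen Q ∧ Q ⊆ V) ∧ R.Pairwise Disjoint ∧ V ⊆ lunion R ∧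
        ∀ pr ∈ L.zip R, ν μ pr.2 = ν μ pr.1 ∧
          (F ∩ pr.2 = ∅ ∨ ν μ (F ∩ pr.2) < ν μ (K ∩ pr.1)) := by
  intro L
  induction L with
  | nil =>
    intro V C hV hC hCV hFV hLcl hLdisj hνV hbd
    have hVempty : V = ∅ := empty_of_ν_zero μ hpos hV.2 (by simp at hνV; simp [hνV])
    exact ⟨[], rfl, by simp, by simp, by simp [hVempty], by simp⟩
  | cons P₁ L' ih =>
    intro V C hV hC hCV hFV hLcl hLdisj hνV hbd
    set b₁ := ν μ (K ∩ P₁) with hb₁def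
    set Sb := (L'.map (fun P => ν μ (K ∩ P))).sum with hSbdef
    set m₁ := ν μ P₁ with hm₁def
    set Sm := (L'.map (ν μ)).sum with hSmdef
    have hνVeq : ν μ V = m₁ + Sm := by simpa using hνV
    have hb₁m : b₁ ≤ m₁ := ν_mono μ inter_subset_right
    have hb₁0 : 0 ≤ b₁ := ν_nonneg μ _
    have hSb0 : 0 ≤ Sb := map_sum_nonneg (fun s _ => ν_nonneg μ _)
    have hSm0 : 0 ≤ Sm := map_sum_nonneg (fun s _ => ν_nonneg μ _)
    have hSbSm : Sb ≤ Sm := List.sum_le_sum (fun P _ => ν_mono μ inter_subset_right)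
    have hm₁0 : 0 ≤ m₁ := ν_nonneg μ _
    -- the key claim: carve the head piece and a new cover
    have claim : ∃ Q₁ C' : Set X, IsClopen Q₁ ∧ Q₁ ⊆ V ∧ ν μ Q₁ = m₁ ∧
        IsClopen C' ∧ C' ⊆ V \ Q₁ ∧ F ∩ (V \ Q₁) ⊆ C' ∧
        (C' = ∅ ∨ ν μ C' < Sb) ∧ (F ∩ Q₁ = ∅ ∨ ν μ (F ∩ Q₁) < b₁) := by
      rcases hbd with hCe | hbd
      · -- case A : no F present at all
        obtain ⟨Q₁, hQcl, -, hQV, hQν⟩ := sandwich μ hsc isClopen_empty hV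
          (hLcl P₁ (by simp)) (empty_subset V) (by simp [hm₁0, ν_nonneg])
          (by rw [hνVeq]; linarith)
        refine ⟨Q₁, ∅, hQcl, hQV, hQν, isClopen_empty, by simp, ?_, Or.inl rfl, Or.inl ?_⟩
        · rw [hCe] at hFV
          intro x hx
          exact absurd (hFV ⟨hx.1, hx.2.1⟩) (by simp)
        · rw [hCe] at hFV
          apply Set.eq_empty_of_subset_empty
          intro x hx
          exact hFV ⟨hx.1, hQV hx.2⟩
      · -- C ≠ ∅ possibly; bound available
        simp only [List.map_cons, List.sum_cons] at hbd
        rw [← hSbdef, ← hb₁def] at hbd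
        -- hbd : ν μ C < b₁ + Sb
        set f_V := ν μ (F ∩ V) with hf_Vdef
        have hf_VC : f_V ≤ ν μ C := ν_mono μ (fun x hx => hFV hx)
        have hf_V0 : 0 ≤ f_V := ν_nonneg μ _
        rcases List.eq_nil_or_concat L' with hL' | hL'ne
        · -- case B1 : last piece, swallow everything into V itself
          subst hL'
          refine ⟨V, ∅, hV, subset_rfl, by rw [hνVeq]; simp [hSmdef], isClopen_empty,
            by simp, by simp, Or.inl rfl, ?_⟩
          rcases (F ∩ V).eq_empty_or_nonempty with he | hne
          · exact Or.inl he
          · refine Or.inr ?_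
            have hSb : Sb = 0 := by simp [hSbdef]
            rw [← hf_Vdef]
            linarith
        · -- L' nonempty
          have hL'nenil : L' ≠ [] := by
            rcases hL'ne with ⟨l, a, rfl⟩; simp
          by_cases hskip : f_V < Sb
          · -- case B2a : skip, next pieces can absorb all of F
            obtain ⟨C'', hC''cl, hFC'', hC''C, hC''ν⟩ := clopen_cover μ (hF.inter hV.1)
              hC.2 hFV (ε := (Sb - f_V)/2) (by linarith)
            have hC''Sb : ν μ C'' < Sb := by rw [← hf_Vdef] at hC''ν; linarith
            obtain ⟨Q₁, hQcl, -, hQV, hQν⟩ := sandwich μ hsc isClopen_empty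
              (hV.diff hC''cl) (hLcl P₁ (by simp)) (empty_subset _) (by simp [hm₁0, ν_nonneg])
              (by
                rw [ν_diff μ (hC''C.trans hCV) hC''cl.1.measurableSet, hνVeq]
                linarith)
            refine ⟨Q₁, C'', hQcl, hQV.trans diff_subset, hQν, hC''cl, ?_, ?_,
              Or.inr hC''Sb, Or.inl ?_⟩
            · intro x hx
              exact ⟨hCV (hC''C hx), fun hxQ => (hQV hxQ).2 hx⟩
            · intro x hx
              exact hFC'' ⟨hx.1, hx.2.1⟩
            · apply Set.eq_empty_of_subset_empty
              intro x hx
              exact absurd (hFC'' ⟨hx.1, hQV hx.2 |>.1⟩) (hQV hx.2).2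
          · push_neg at hskip  -- Sb ≤ f_V
            by_cases hSbpos : 0 < Sb
            · -- case B2b-ii : grab
              set t := f_V - Sb with htdef
              have ht0 : 0 ≤ t := by linarith
              have htb₁ : t < b₁ := by linarith
              set δ := (b₁ - t)/2 with hδdef
              have hδpos : 0 < δ := by rw [hδdef]; linarith
              have hFCeq : F ∩ C = F ∩ V := by
                apply Set.Subset.antisymm (inter_subset_inter_right F hCV)
                intro x hx; exact ⟨hx.1, hFV hx⟩
              have htFC : t < ν μ (F ∩ C) := by rw [hFCeq, ← hf_Vdef]; linarith
              obtain ⟨E, W, hEcl, hWcl, hEC, hWC, hEW, hFEW, hmass1, hmass2, hEν⟩ :=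
                grab μ hcont hC hF ht0 hδpos htFC
              set mass := ν μ (F ∩ E) with hmassdef
              -- mass of F in W
              have hFWν : ν μ (F ∩ W) = f_V - mass := by
                have hdisj : Disjoint (F ∩ E) (F ∩ W) :=
                  hEW.mono inter_subset_right inter_subset_right
                have hsplit : F ∩ C = (F ∩ E) ∪ (F ∩ W) := by
                  apply Set.Subset.antisymm
                  · intro x hx
                    rcases hFEW hx with h | h
                    · exact Or.inl ⟨hx.1, h⟩
                    · exact Or.inr ⟨hx.1, h⟩
                  · rintro x (⟨h1, h2⟩ | ⟨h1, h2⟩)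
                    · exact ⟨h1, hEC h2⟩
                    · exact ⟨h1, hWC h2⟩
                have := ν_union μ hdisj (hF.measurableSet.inter hWcl.1.measurableSet)
                rw [← hsplit, hFCeq, ← hf_Vdef, ← hmassdef] at this
                linarith
              have hFWlt : ν μ (F ∩ W) < Sb := by rw [hFWν]; linarith
              obtain ⟨C'', hC''cl, hFC'', hC''W, hC''ν⟩ := clopen_cover μ
                (hF.inter hWcl.1) hWcl.2 inter_subset_right
                (ε := (Sb - ν μ (F ∩ W))/2) (by linarith)
              have hC''Sb : ν μ C'' < Sb := by linarith
              obtain ⟨Q₁, hQcl, hEQ, hQV, hQν⟩ := sandwich μ hsc hEcl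
                (hV.diff hC''cl) (hLcl P₁ (by simp))
                (fun x hx => ⟨hCV (hEC hx), fun hxC'' =>
                  Set.disjoint_left.1 hEW hx (hC''W hxC'')⟩)
                (by
                  -- ν E ≤ m₁
                  have : ν μ E ≤ b₁ := by
                    have : t + 2 * δ = b₁ := by rw [hδdef]; ring
                    linarith
                  linarith)
                (by
                  rw [ν_diff μ (hC''W.trans (hWC.trans hCV)) hC''cl.1.measurableSet, hνVeq]
                  linarith)
              have hFQ₁ : F ∩ Q₁ = F ∩ E := by
                apply Set.Subset.antisymm
                · intro x hx
                  have hxV : x ∈ F ∩ V := ⟨hx.1, (hQV hx.2).1⟩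
                  have hxC : x ∈ F ∩ C := hFCeq ▸ hxV
                  rcases hFEW hxC with h | h
                  · exact ⟨hx.1, h⟩
                  · exact absurd (hFC'' ⟨hx.1, h⟩) (hQV hx.2).2
                · exact fun x hx => ⟨hx.1, hEQ hx.2⟩
              refine ⟨Q₁, C'', hQcl, hQV.trans diff_subset, hQν, hC''cl, ?_, ?_,
                Or.inr hC''Sb, Or.inr ?_⟩
              · intro x hx
                exact ⟨hCV (hWC (hC''W hx)), fun hxQ => (hQV hxQ).2 hx⟩
              · intro x hx
                have hxC : x ∈ F ∩ C := hFCeq ▸ (⟨hx.1, hx.2.1⟩ : x ∈ F ∩ V)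
                rcases hFEW hxC with h | h
                · exact absurd (hEQ h) hx.2.2
                · exact hFC'' ⟨hx.1, h⟩
              · rw [hFQ₁, ← hmassdef]
                have : t + δ < b₁ := by rw [hδdef]; linarith
                linarith
            · -- case B2b-i : Sb = 0, swallow all of F into the head piece
              push_neg at hSbpos
              have hSb0' : Sb = 0 := le_antisymm hSbpos hSb0
              have hCb₁ : ν μ C < b₁ := by linarith
              obtain ⟨Q₁, hQcl, hCQ, hQV, hQν⟩ := sandwich μ hsc hC hV
                (hLcl P₁ (by simp)) hCV (by linarith) (by rw [hνVeq]; linarith)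
              refine ⟨Q₁, ∅, hQcl, hQV, hQν, isClopen_empty, by simp, ?_, Or.inl rfl, ?_⟩
              · intro x hx
                exact absurd (hCQ (hFV ⟨hx.1, hx.2.1⟩)) hx.2.2
              · rcases (F ∩ Q₁).eq_empty_or_nonempty with he | hne
                · exact Or.inl he
                · refine Or.inr ?_
                  have : ν μ (F ∩ Q₁) ≤ ν μ C :=
                    ν_mono μ (fun x hx => hFV ⟨hx.1, hQV hx.2⟩)
                  linarith
    -- assemble
    obtain ⟨Q₁, C', hQcl, hQV, hQν, hC'cl, hC'sub, hFC', hbound, hinv₁⟩ := claim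
    obtain ⟨R', hR'len, hR'mem, hR'disj, hR'cover, hR'zip⟩ := ih (V \ Q₁) C'
      (hV.diff hQcl) hC'cl hC'sub hFC'
      (fun P hP => hLcl P (by simp [hP])) (List.pairwise_cons.1 hLdisj).2
      (by
        rw [ν_diff μ hQV hQcl.1.measurableSet, hνVeq, hQν]
        ring)
      hbound
    refine ⟨Q₁ :: R', by simp [hR'len], ?_, ?_, ?_, ?_⟩
    · intro Q hQ
      rcases List.mem_cons.1 hQ with rfl | hQ
      · exact ⟨hQcl, hQV⟩
      · exact ⟨(hR'mem Q hQ).1, (hR'mem Q hQ).2.trans diff_subset⟩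
    · rw [List.pairwise_cons]
      refine ⟨fun Q hQ => ?_, hR'disj⟩
      exact Set.disjoint_left.2 (fun x hx hx2 => ((hR'mem Q hQ).2 hx2).2 hx)
    · intro x hx
      by_cases hxQ : x ∈ Q₁
      · exact mem_lunion.2 ⟨Q₁, by simp, hxQ⟩
      · rcases mem_lunion.1 (hR'cover ⟨hx, hxQ⟩) with ⟨s, hs, hxs⟩
        exact mem_lunion.2 ⟨s, by simp [hs], hxs⟩
    · intro pr hpr
      rw [List.zip_cons_cons] at hpr
      rcases List.mem_cons.1 hpr with rfl | hpr
      · exact ⟨hQν, hinv₁⟩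
      · exact hR'zip pr hpr

/-- The K-distribution engine: given a partition-to-be `L` (the Q-side pieces) with
F-needs, carve matching clopen pieces of `V` grabbing enough of `K` for each piece. -/
lemma carveK
    (hpos : ∀ U : Set X, IsOpen U → U.Nonempty → 0 < μ U)
    (hcont : ∀ x : X, μ {x} = 0)
    (hsc : ∀ U V : Set X, IsClopen U → IsClopen V → μ U < μ V →
      ∃ W, W ⊆ V ∧ IsClopen W ∧ μ W = μ U)
    {F K : Set X} (hF : IsClosed F) (hK : IsClosed K) :
    ∀ (L : List (Set X)) (V : Set X), IsClopen V →
      (∀ Q ∈ L, IsClopen Q ∧ ν μ (F ∩ Q) < ν μ Q) → L.Pairwise Disjoint →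
      ν μ V = (L.map (ν μ)).sum →
      (F ∩ lunion L = ∅ ∨ (L.map (fun Q => ν μ (F ∩ Q))).sum < ν μ (K ∩ V)) →
      ∃ R : List (Set X), R.length = L.length ∧
        (∀ P ∈ R, IsClopen P ∧ P ⊆ V) ∧ R.Pairwise Disjoint ∧ V ⊆ lunion R ∧
        ∀ pr ∈ L.zip R, ν μ pr.2 = ν μ pr.1 ∧
          ((F ∩ pr.1).Nonempty → ν μ (F ∩ pr.1) < ν μ (K ∩ pr.2)) := by
  intro L
  induction L with
  | nil =>
    intro V hV hLmem hLdisj hνV hbig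
    have hVempty : V = ∅ := empty_of_ν_zero μ hpos hV.2 (by simp at hνV; simp [hνV])
    exact ⟨[], rfl, by simp, by simp, by simp [hVempty], by simp⟩
  | cons Q₁ L' ih =>
    intro V hV hLmem hLdisj hνV hbig
    set e₁ := ν μ (F ∩ Q₁) with he₁def
    set Se := (L'.map (fun Q => ν μ (F ∩ Q))).sum with hSedef
    set m₁ := ν μ Q₁ with hm₁def
    set Sm := (L'.map (ν μ)).sum with hSmdef
    have hνVeq : ν μ V = m₁ + Sm := by simpa using hνV
    have he₁0 : 0 ≤ e₁ := ν_nonneg μ _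
    have hSe0 : 0 ≤ Se := map_sum_nonneg (fun s _ => ν_nonneg μ _)
    have hSm0 : 0 ≤ Sm := map_sum_nonneg (fun s _ => ν_nonneg μ _)
    have hm₁0 : 0 ≤ m₁ := ν_nonneg μ _
    have he₁m₁ : e₁ < m₁ := (hLmem Q₁ (by simp)).2
    have hQ₁cl : IsClopen Q₁ := (hLmem Q₁ (by simp)).1
    have hSeSm : Se ≤ Sm :=
      List.sum_le_sum (fun Q hQ => (ν_mono μ inter_subset_right : ν μ (F ∩ Q) ≤ ν μ Q))
    rcases hbig with hFe | hbd
    · -- no F at all: free carving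
      have hFQ₁ : F ∩ Q₁ = ∅ := by
        apply Set.eq_empty_of_subset_empty
        rw [← hFe]
        exact inter_subset_inter_right F (subset_lunion (by simp))
      obtain ⟨P₁, hPcl, -, hPV, hPν⟩ := sandwich μ hsc isClopen_empty hV hQ₁cl
        (empty_subset V) (by simp [hm₁0, ν_nonneg]) (by rw [hνVeq]; linarith)
      obtain ⟨R', hR'len, hR'mem, hR'disj, hR'cover, hR'zip⟩ := ih (V \ P₁)
        (hV.diff hPcl) (fun Q hQ => hLmem Q (by simp [hQ]))
        (List.pairwise_cons.1 hLdisj).2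
        (by rw [ν_diff μ hPV hPcl.1.measurableSet, hνVeq, hPν]; ring)
        (Or.inl (by
          apply Set.eq_empty_of_subset_empty
          rw [← hFe]
          refine inter_subset_inter_right F (lunion_subset (fun s hs => ?_))
          exact subset_lunion (by simp [hs])))
      refine ⟨P₁ :: R', by simp [hR'len], ?_, ?_, ?_, ?_⟩
      · intro P hP
        rcases List.mem_cons.1 hP with rfl | hP
        · exact ⟨hPcl, hPV⟩
        · exact ⟨(hR'mem P hP).1, (hR'mem P hP).2.trans diff_subset⟩
      · rw [List.pairwise_cons]
        exact ⟨fun P hP => Set.disjoint_left.2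
          (fun x hx hx2 => ((hR'mem P hP).2 hx2).2 hx), hR'disj⟩
      · intro x hx
        by_cases hxP : x ∈ P₁
        · exact mem_lunion.2 ⟨P₁, by simp, hxP⟩
        · rcases mem_lunion.1 (hR'cover ⟨hx, hxP⟩) with ⟨s, hs, hxs⟩
          exact mem_lunion.2 ⟨s, by simp [hs], hxs⟩
      · intro pr hpr
        rw [List.zip_cons_cons] at hpr
        rcases List.mem_cons.1 hpr with rfl | hpr
        · exact ⟨hPν, fun hne => absurd hFQ₁ (Set.nonempty_iff_ne_empty.1 hne)⟩
        · exact hR'zip pr hpr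
    · -- hbd : e₁ + Se < ν (K ∩ V)
      simp only [List.map_cons, List.sum_cons] at hbd
      rw [← hSedef, ← he₁def] at hbd
      set c := ν μ (K ∩ V) with hcdef
      rcases List.eq_nil_or_concat L' with hL' | hL'ne
      · -- last piece: take all of V
        subst hL'
        refine ⟨[V], rfl, by simp [hV], by simp, by simp [subset_lunion], ?_⟩
        intro pr hpr
        simp only [List.zip_cons_cons, List.zip_nil_left, List.mem_singleton] at hpr
        subst hpr
        have hSe' : Se = 0 := by simp [hSedef]
        refine ⟨by rw [hνVeq]; simp [hSmdef, hm₁def], fun _ => ?_⟩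
        rw [← he₁def, ← hcdef]
        linarith
      · have hL'nenil : L' ≠ [] := by rcases hL'ne with ⟨l, a, rfl⟩; simp
        have hSeSm' : Se < Sm := by
          rcases List.exists_mem_of_ne_nil L' hL'nenil with ⟨Q, hQ⟩
          exact List.sum_lt_sum _ _
            (fun Q' hQ' => (ν_mono μ inter_subset_right : ν μ (F ∩ Q') ≤ ν μ Q'))
            ⟨Q, hQ, (hLmem Q (by simp [hQ])).2⟩
        -- claim: carve the head partner
        have claim : ∃ P₁ : Set X, IsClopen P₁ ∧ P₁ ⊆ V ∧ ν μ P₁ = m₁ ∧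
            ((F ∩ Q₁).Nonempty → e₁ < ν μ (K ∩ P₁)) ∧ Se < ν μ (K ∩ (V \ P₁)) := by
          rcases (F ∩ Q₁).eq_empty_or_nonempty with hFQ₁ | hFQ₁
          · -- no need to grab for the head; protect the future
            have he₁' : e₁ = 0 := by rw [he₁def, hFQ₁]; simp
            set δ := (Sm - Se)/2 with hδdef
            have hδpos : 0 < δ := by rw [hδdef]; linarith
            obtain ⟨E₂, W₂, hE₂cl, hW₂cl, hE₂V, hW₂V, hE₂W₂, hKEW, hg1, hg2, hg3⟩ :=
              grab μ hcont hV hK (t := Se) hSe0 hδpos (by rw [← hcdef]; linarith)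
            obtain ⟨P₁, hPcl, -, hPV, hPν⟩ := sandwich μ hsc isClopen_empty
              (hV.diff hE₂cl) hQ₁cl (empty_subset _) (by simp [hm₁0, ν_nonneg])
              (by
                rw [ν_diff μ hE₂V hE₂cl.1.measurableSet, hνVeq]
                have : ν μ E₂ ≤ Se + 2*δ := by linarith
                have : Se + 2*δ = Sm := by rw [hδdef]; ring
                linarith)
            refine ⟨P₁, hPcl, hPV.trans diff_subset, hPν,
              fun hne => absurd hFQ₁ (Set.nonempty_iff_ne_empty.1 hne), ?_⟩
            calc Se < ν μ (K ∩ E₂) := hg1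
              _ ≤ ν μ (K ∩ (V \ P₁)) := ν_mono μ (fun x hx =>
                  ⟨hx.1, hE₂V hx.2, fun hxP => (hPV hxP).2 hx.2⟩)
          · -- grab for the head, and protect the future
            set δ₁ := min ((m₁ - e₁)/2) ((c - e₁ - Se)/4) with hδ₁def
            have hδ₁pos : 0 < δ₁ := by
              rw [hδ₁def]
              apply lt_min <;> linarith
            obtain ⟨G₁, W₁, hG₁cl, hW₁cl, hG₁V, hW₁V, hG₁W₁, hKG, hk1, hk2, hk3⟩ :=
              grab μ hcont hV hK (t := e₁) he₁0 hδ₁pos (by rw [← hcdef]; linarith)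
            have hνG₁ : ν μ G₁ ≤ e₁ + 2*δ₁ := by linarith
            have hKG₁ : ν μ (K ∩ G₁) ≤ e₁ + δ₁ := hk2
            -- K-mass in V \ G₁
            have hKrest : Se < ν μ (K ∩ (V \ G₁)) := by
              have hsub : K ∩ G₁ ⊆ K ∩ V := inter_subset_inter_right K hG₁V
              have heq : K ∩ (V \ G₁) = (K ∩ V) \ (K ∩ G₁) := by
                ext x
                constructor
                · rintro ⟨h1, h2, h3⟩; exact ⟨⟨h1, h2⟩, fun hx => h3 hx.2⟩
                · rintro ⟨⟨h1, h2⟩, h3⟩; exact ⟨h1, h2, fun hx => h3 ⟨h1, hx⟩⟩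
              rw [heq, ν_diff μ hsub (hK.measurableSet.inter hG₁cl.1.measurableSet)]
              have hδ₁le : δ₁ ≤ (c - e₁ - Se)/4 := by rw [hδ₁def]; exact min_le_right _ _
              linarith
            set δ₂ := (Sm - Se)/2 with hδ₂def
            have hδ₂pos : 0 < δ₂ := by rw [hδ₂def]; linarith
            obtain ⟨E₂, W₂, hE₂cl, hW₂cl, hE₂V, hW₂V, hE₂W₂, hKEW, hg1, hg2, hg3⟩ :=
              grab μ hcont (hV.diff hG₁cl) hK (t := Se) hSe0 hδ₂pos hKrest
            have hG₁E₂ : Disjoint G₁ E₂ :=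
              Set.disjoint_left.2 (fun x hx hx2 => (hE₂V hx2).2 hx)
            obtain ⟨P₁, hPcl, hGP, hPV, hPν⟩ := sandwich μ hsc hG₁cl
              (hV.diff hE₂cl) hQ₁cl
              (fun x hx => ⟨hG₁V hx, fun hxE => Set.disjoint_left.1 hG₁E₂ hx hxE⟩)
              (by
                have hδ₁le : δ₁ ≤ (m₁ - e₁)/2 := by rw [hδ₁def]; exact min_le_left _ _
                linarith)
              (by
                rw [ν_diff μ (hE₂V.trans diff_subset) hE₂cl.1.measurableSet, hνVeq]
                have h1 : ν μ E₂ ≤ Se + 2*δ₂ := by linarith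
                have h2 : Se + 2*δ₂ = Sm := by rw [hδ₂def]; ring
                linarith)
            refine ⟨P₁, hPcl, hPV.trans diff_subset, hPν, fun _ => ?_, ?_⟩
            · calc e₁ < ν μ (K ∩ G₁) := hk1
                _ ≤ ν μ (K ∩ P₁) := ν_mono μ (inter_subset_inter_right K hGP)
            · calc Se < ν μ (K ∩ E₂) := hg1
                _ ≤ ν μ (K ∩ (V \ P₁)) := ν_mono μ (fun x hx =>
                    ⟨hx.1, (hE₂V hx.2).1, fun hxP => (hPV hxP).2 hx.2⟩)
        obtain ⟨P₁, hPcl, hPV, hPν, hPinv, hPrest⟩ := claim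
        obtain ⟨R', hR'len, hR'mem, hR'disj, hR'cover, hR'zip⟩ := ih (V \ P₁)
          (hV.diff hPcl) (fun Q hQ => hLmem Q (by simp [hQ]))
          (List.pairwise_cons.1 hLdisj).2
          (by rw [ν_diff μ hPV hPcl.1.measurableSet, hνVeq, hPν]; ring)
          (Or.inr hPrest)
        refine ⟨P₁ :: R', by simp [hR'len], ?_, ?_, ?_, ?_⟩
        · intro P hP
          rcases List.mem_cons.1 hP with rfl | hP
          · exact ⟨hPcl, hPV⟩
          · exact ⟨(hR'mem P hP).1, (hR'mem P hP).2.trans diff_subset⟩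
        · rw [List.pairwise_cons]
          exact ⟨fun P hP => Set.disjoint_left.2
            (fun x hx hx2 => ((hR'mem P hP).2 hx2).2 hx), hR'disj⟩
        · intro x hx
          by_cases hxP : x ∈ P₁
          · exact mem_lunion.2 ⟨P₁, by simp, hxP⟩
          · rcases mem_lunion.1 (hR'cover ⟨hx, hxP⟩) with ⟨s, hs, hxs⟩
            exact mem_lunion.2 ⟨s, by simp [hs], hxs⟩
        · intro pr hpr
          rw [List.zip_cons_cons] at hpr
          rcases List.mem_cons.1 hpr with rfl | hpr
          · exact ⟨hPν, hPinv⟩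
          · exact hR'zip pr hpr

lemma lunion_append (l₁ l₂ : List (Set X)) :
    lunion (l₁ ++ l₂) = lunion l₁ ∪ lunion l₂ := by
  induction l₁ with
  | nil => simp
  | cons a l ih => simp [ih, Set.union_assoc]

/-- a matched pair of clopen pieces with the transfer invariant -/
def GoodPair (μ : Measure X) (F K : Set X) (p : Set X × Set X) : Prop :=
  IsClopen p.1 ∧ IsClopen p.2 ∧ p.1.Nonempty ∧ p.2.Nonempty ∧ ν μ p.1 = ν μ p.2 ∧
    ((F ∩ p.2).Nonempty → ν μ (F ∩ p.2) < ν μ (K ∩ p.1))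

def GoodList (μ : Measure X) (F K : Set X) (L : List (Set X × Set X)) : Prop :=
  (∀ p ∈ L, GoodPair μ F K p) ∧
  L.Pairwise (fun a b => Disjoint a.1 b.1) ∧
  L.Pairwise (fun a b => Disjoint a.2 b.2)

lemma pairwise_zip_left {α β : Type*} {R : α → α → Prop} :
    ∀ {l₁ : List α} {l₂ : List β}, l₁.Pairwise R →
      (l₁.zip l₂).Pairwise (fun p q => R p.1 q.1) := by
  intro l₁
  induction l₁ with
  | nil => intro l₂ _; simp
  | cons a l₁ ih =>
    intro l₂ h
    cases l₂ with
    | nil => simp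
    | cons b l₂ =>
      rw [List.zip_cons_cons, List.pairwise_cons]
      refine ⟨fun p hp => ?_, ih (List.pairwise_cons.1 h).2⟩
      exact (List.pairwise_cons.1 h).1 p.1 (List.of_mem_zip hp).1

lemma pairwise_zip_right {α β : Type*} {R : β → β → Prop} :
    ∀ {l₁ : List α} {l₂ : List β}, l₂.Pairwise R →
      (l₁.zip l₂).Pairwise (fun p q => R p.2 q.2) := by
  intro l₁
  induction l₁ with
  | nil => intro l₂ _; simp
  | cons a l₁ ih =>
    intro l₂ h
    cases l₂ with
    | nil => simp
    | cons b l₂ =>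
      rw [List.zip_cons_cons, List.pairwise_cons]
      refine ⟨fun p hp => ?_, ih (List.pairwise_cons.1 h).2⟩
      exact (List.pairwise_cons.1 h).1 p.2 (List.of_mem_zip hp).2

/-- refine a pair, making the first components small -/
lemma refinePairP
    (hpos : ∀ U : Set X, IsOpen U → U.Nonempty → 0 < μ U)
    (hcont : ∀ x : X, μ {x} = 0)
    (hsc : ∀ U V : Set X, IsClopen U → IsClopen V → μ U < μ V →
      ∃ W, W ⊆ V ∧ IsClopen W ∧ μ W = μ U)
    {F K : Set X} (hF : IsClosed F) (hK : IsClosed K)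
    {p : Set X × Set X} (hp : GoodPair μ F K p) {δ : ℝ} (hδ : 0 < δ) :
    ∃ l : List (Set X × Set X),
      (∀ q ∈ l, GoodPair μ F K q ∧ q.1 ⊆ p.1 ∧ q.2 ⊆ p.2 ∧ Small δ q.1) ∧
      l.Pairwise (fun a b => Disjoint a.1 b.1) ∧
      l.Pairwise (fun a b => Disjoint a.2 b.2) ∧
      p.1 ⊆ lunion (l.map Prod.fst) ∧ p.2 ⊆ lunion (l.map Prod.snd) := by
  obtain ⟨hP, hQ, hPne, hQne, hνPQ, hInv⟩ := hp
  obtain ⟨L, hLmem, hLdisj, hLun⟩ := fine_partition μ hcont hP hδ one_pos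
  have hLcl : ∀ P' ∈ L, IsClopen P' := fun P' h => (hLmem P' h).1
  have hsum : ν μ p.2 = (L.map (ν μ)).sum := by
    rw [← hνPQ, ← hLun, ν_lunion μ L hLcl hLdisj]
  have hbudget : ν μ (K ∩ p.1) = (L.map (fun P' => ν μ (K ∩ P'))).sum := by
    rw [← hLun, ν_inter_lunion μ hK.measurableSet L hLcl hLdisj]
  -- build the cover C₀
  have hcover : ∃ C : Set X, IsClopen C ∧ C ⊆ p.2 ∧ F ∩ p.2 ⊆ C ∧
      (C = ∅ ∨ ν μ C < (L.map (fun P' => ν μ (K ∩ P'))).sum) := by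
    rcases (F ∩ p.2).eq_empty_or_nonempty with he | hne
    · exact ⟨∅, isClopen_empty, empty_subset _, he ▸ subset_rfl, Or.inl rfl⟩
    · have hflt : ν μ (F ∩ p.2) < ν μ (K ∩ p.1) := hInv hne
      obtain ⟨C, hCcl, hFC, hCQ, hCν⟩ := clopen_cover μ (hF.inter hQ.1) hQ.2
        inter_subset_right (ε := (ν μ (K ∩ p.1) - ν μ (F ∩ p.2))/2) (by linarith)
      refine ⟨C, hCcl, hCQ, hFC, Or.inr ?_⟩
      rw [← hbudget]
      linarith
  obtain ⟨C, hCcl, hCQ, hFC, hbd⟩ := hcover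
  obtain ⟨R, hRlen, hRmem, hRdisj, hRcover, hRzip⟩ := carveF μ hpos hcont hsc hF hK
    L p.2 C hQ hCcl hCQ hFC hLcl hLdisj hsum hbd
  refine ⟨L.zip R, ?_, pairwise_zip_left hLdisj, pairwise_zip_right hRdisj, ?_, ?_⟩
  · intro q hq
    obtain ⟨hq1, hq2⟩ := List.of_mem_zip hq
    obtain ⟨hcl1, hne1, hsub1, hsm1, -⟩ := hLmem q.1 hq1
    obtain ⟨hν, hinv⟩ := hRzip q hq
    have hνpos : 0 < ν μ q.2 := by
      rw [hν]; exact ν_strict_pos μ hpos hcl1.2 hne1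
    refine ⟨⟨hcl1, (hRmem q.2 hq2).1, hne1, nonempty_of_ν_pos μ hνpos, hν.symm, ?_⟩,
      hsub1, (hRmem q.2 hq2).2, hsm1⟩
    intro hFne
    rcases hinv with he | hlt
    · exact absurd he (Set.nonempty_iff_ne_empty.1 hFne)
    · exact hlt
  · rw [List.map_fst_zip hRlen.ge, hLun]
  · intro x hx
    rcases mem_lunion.1 (hRcover hx) with ⟨s, hs, hxs⟩
    rw [List.map_snd_zip hRlen.le]
    exact mem_lunion.2 ⟨s, hs, hxs⟩

/-- refine a pair, making the second components small -/
lemma refinePairQ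
    (hpos : ∀ U : Set X, IsOpen U → U.Nonempty → 0 < μ U)
    (hcont : ∀ x : X, μ {x} = 0)
    (hsc : ∀ U V : Set X, IsClopen U → IsClopen V → μ U < μ V →
      ∃ W, W ⊆ V ∧ IsClopen W ∧ μ W = μ U)
    {F K : Set X} (hF : IsClosed F) (hFnd : interior F = ∅) (hK : IsClosed K)
    {p : Set X × Set X} (hp : GoodPair μ F K p) {δ : ℝ} (hδ : 0 < δ) :
    ∃ l : List (Set X × Set X),
      (∀ q ∈ l, GoodPair μ F K q ∧ q.1 ⊆ p.1 ∧ q.2 ⊆ p.2 ∧ Small δ q.2) ∧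
      l.Pairwise (fun a b => Disjoint a.1 b.1) ∧
      l.Pairwise (fun a b => Disjoint a.2 b.2) ∧
      p.1 ⊆ lunion (l.map Prod.fst) ∧ p.2 ⊆ lunion (l.map Prod.snd) := by
  obtain ⟨hP, hQ, hPne, hQne, hνPQ, hInv⟩ := hp
  obtain ⟨L, hLmem, hLdisj, hLun⟩ := fine_partition μ hcont hQ hδ one_pos
  have hLcl : ∀ Q' ∈ L, IsClopen Q' := fun Q' h => (hLmem Q' h).1
  have hLgood : ∀ Q' ∈ L, IsClopen Q' ∧ ν μ (F ∩ Q') < ν μ Q' := by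
    intro Q' hQ'
    obtain ⟨hcl, hne, -, -, -⟩ := hLmem Q' hQ'
    refine ⟨hcl, ?_⟩
    have hsplit : Q' = (F ∩ Q') ∪ (Q' \ F) := by
      ext x; constructor
      · intro hx
        by_cases hxF : x ∈ F
        · exact Or.inl ⟨hxF, hx⟩
        · exact Or.inr ⟨hx, hxF⟩
      · rintro (hx | hx)
        · exact hx.2
        · exact hx.1
    have hdisj : Disjoint (F ∩ Q') (Q' \ F) :=
      Set.disjoint_left.2 (fun x hx hx2 => hx2.2 hx.1)
    have hd : ν μ Q' = ν μ (F ∩ Q') + ν μ (Q' \ F) := by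
      conv_lhs => rw [hsplit]
      exact ν_union μ hdisj (hcl.1.measurableSet.diff hF.measurableSet)
    have hopen : IsOpen (Q' \ F) := hcl.2.sdiff hF
    have hnedif : (Q' \ F).Nonempty := by
      rcases (Q' \ F).eq_empty_or_nonempty with he | hne'
      · exfalso
        have hsub : Q' ⊆ F := by
          intro x hx
          by_contra hxF
          exact absurd he (Set.nonempty_iff_ne_empty.1 ⟨x, hx, hxF⟩)
        have : Q' ⊆ interior F := hcl.2.subset_interior_iff.2 hsub
        rw [hFnd] at this
        exact hne.ne_empty (Set.eq_empty_of_subset_empty this)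
      · exact hne'
    have := ν_strict_pos μ hpos hopen hnedif
    linarith
  have hsum : ν μ p.1 = (L.map (ν μ)).sum := by
    rw [hνPQ, ← hLun, ν_lunion μ L hLcl hLdisj]
  have hbig : F ∩ lunion L = ∅ ∨
      (L.map (fun Q' => ν μ (F ∩ Q'))).sum < ν μ (K ∩ p.1) := by
    rcases (F ∩ p.2).eq_empty_or_nonempty with he | hne
    · exact Or.inl (by rw [hLun]; exact he)
    · refine Or.inr ?_
      have := hInv hne
      rw [← ν_inter_lunion μ hF.measurableSet L hLcl hLdisj, hLun]
      exact this
  obtain ⟨R, hRlen, hRmem, hRdisj, hRcover, hRzip⟩ := carveK μ hpos hcont hsc hF hK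
    L p.1 hP hLgood hLdisj hsum hbig
  refine ⟨(L.zip R).map (fun pr => (pr.2, pr.1)), ?_, ?_, ?_, ?_, ?_⟩
  · intro q hq
    obtain ⟨pr, hpr, rfl⟩ := List.mem_map.1 hq
    obtain ⟨hq1, hq2⟩ := List.of_mem_zip hpr
    obtain ⟨hcl1, hne1, hsub1, hsm1, -⟩ := hLmem pr.1 hq1
    obtain ⟨hν, hinv⟩ := hRzip pr hpr
    have hνpos : 0 < ν μ pr.2 := by
      rw [hν]; exact ν_strict_pos μ hpos hcl1.2 hne1
    exact ⟨⟨(hRmem pr.2 hq2).1, hcl1, nonempty_of_ν_pos μ hνpos, hne1, hν, hinv⟩,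
      (hRmem pr.2 hq2).2, hsub1, hsm1⟩
  · rw [List.pairwise_map]
    exact pairwise_zip_right hRdisj
  · rw [List.pairwise_map]
    exact pairwise_zip_left hLdisj
  · intro x hx
    rcases mem_lunion.1 (hRcover hx) with ⟨s, hs, hxs⟩
    have : s ∈ ((L.zip R).map (fun pr => (pr.2, pr.1))).map Prod.fst := by
      rw [List.map_map]
      have : s ∈ (L.zip R).map (fun pr => pr.2) := by
        rw [show ((L.zip R).map fun pr => pr.2) = R from List.map_snd_zip hRlen.le]
        exact hs
      simpa using this
    exact mem_lunion.2 (by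
      rcases List.mem_map.1 this with ⟨t, ht, rfl⟩
      exact ⟨_, List.mem_map.2 ⟨t, ht, rfl⟩, hxs⟩)
  · intro x hx
    rw [← hLun] at hx
    rcases mem_lunion.1 hx with ⟨s, hs, hxs⟩
    refine mem_lunion.2 ⟨s, ?_, hxs⟩
    have : s ∈ ((L.zip R).map (fun pr => (pr.2, pr.1))).map Prod.snd := by
      rw [List.map_map]
      have : s ∈ (L.zip R).map (fun pr => pr.1) := by
        rw [show ((L.zip R).map fun pr => pr.1) = L from List.map_fst_zip hRlen.ge]
        exact hs
      simpa using this
    exact this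

/-- refine all pairs of a good list; `side = true` makes first components small,
`side = false` the second components. -/
lemma refineAll
    (hpos : ∀ U : Set X, IsOpen U → U.Nonempty → 0 < μ U)
    (hcont : ∀ x : X, μ {x} = 0)
    (hsc : ∀ U V : Set X, IsClopen U → IsClopen V → μ U < μ V →
      ∃ W, W ⊆ V ∧ IsClopen W ∧ μ W = μ U)
    {F K : Set X} (hF : IsClosed F) (hFnd : interior F = ∅) (hK : IsClosed K)
    (side : Bool) {δ : ℝ} (hδ : 0 < δ) :
    ∀ (L : List (Set X × Set X)), GoodList μ F K L →
    ∃ L' : List (Set X × Set X), GoodList μ F K L' ∧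
      (∀ q ∈ L', ∃ p ∈ L, q.1 ⊆ p.1 ∧ q.2 ⊆ p.2 ∧
        Small δ (if side then q.1 else q.2)) ∧
      lunion (L.map Prod.fst) ⊆ lunion (L'.map Prod.fst) ∧
      lunion (L.map Prod.snd) ⊆ lunion (L'.map Prod.snd) := by
  intro L
  induction L with
  | nil => exact fun _ => ⟨[], ⟨by simp, by simp, by simp⟩, by simp, by simp, by simp⟩
  | cons p L ih =>
    intro hL
    obtain ⟨hmem, hd1, hd2⟩ := hL
    obtain ⟨L'', hL''good, hL''ref, hcov1, hcov2⟩ := ih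
      ⟨fun q hq => hmem q (by simp [hq]),
       (List.pairwise_cons.1 hd1).2, (List.pairwise_cons.1 hd2).2⟩
    have hstep : ∃ l : List (Set X × Set X),
        (∀ q ∈ l, GoodPair μ F K q ∧ q.1 ⊆ p.1 ∧ q.2 ⊆ p.2 ∧
          Small δ (if side then q.1 else q.2)) ∧
        l.Pairwise (fun a b => Disjoint a.1 b.1) ∧
        l.Pairwise (fun a b => Disjoint a.2 b.2) ∧
        p.1 ⊆ lunion (l.map Prod.fst) ∧ p.2 ⊆ lunion (l.map Prod.snd) := by
      cases side
      · simpa using refinePairQ μ hpos hcont hsc hF hFnd hK (hmem p (by simp)) hδ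
      · simpa using refinePairP μ hpos hcont hsc hF hK (hmem p (by simp)) hδ
    obtain ⟨l, hlmem, hld1, hld2, hlcov1, hlcov2⟩ := hstep
    refine ⟨l ++ L'', ⟨?_, ?_, ?_⟩, ?_, ?_, ?_⟩
    · intro q hq
      rcases List.mem_append.1 hq with hq | hq
      · exact (hlmem q hq).1
      · exact hL''good.1 q hq
    · rw [List.pairwise_append]
      refine ⟨hld1, hL''good.2.1, fun a ha b hb => ?_⟩
      obtain ⟨r, hr, hrb1, -, -⟩ := hL''ref b hb
      exact ((List.pairwise_cons.1 hd1).1 r hr).mono (hlmem a ha).2.1 hrb1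
    · rw [List.pairwise_append]
      refine ⟨hld2, hL''good.2.2, fun a ha b hb => ?_⟩
      obtain ⟨r, hr, -, hrb2, -⟩ := hL''ref b hb
      exact ((List.pairwise_cons.1 hd2).1 r hr).mono (hlmem a ha).2.2.1 hrb2
    · intro q hq
      rcases List.mem_append.1 hq with hq | hq
      · exact ⟨p, by simp, (hlmem q hq).2.1, (hlmem q hq).2.2.1, (hlmem q hq).2.2.2⟩
      · obtain ⟨r, hr, h1, h2, h3⟩ := hL''ref q hq
        exact ⟨r, by simp [hr], h1, h2, h3⟩
    · rw [List.map_cons, lunion_cons, List.map_append, lunion_append]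
      exact Set.union_subset_union hlcov1 hcov1
    · rw [List.map_cons, lunion_cons, List.map_append, lunion_append]
      exact Set.union_subset_union hlcov2 hcov2

/-- one full refinement step: both components become `δ`-small -/
lemma refineMatching
    (hpos : ∀ U : Set X, IsOpen U → U.Nonempty → 0 < μ U)
    (hcont : ∀ x : X, μ {x} = 0)
    (hsc : ∀ U V : Set X, IsClopen U → IsClopen V → μ U < μ V →
      ∃ W, W ⊆ V ∧ IsClopen W ∧ μ W = μ U)
    {F K : Set X} (hF : IsClosed F) (hFnd : interior F = ∅) (hK : IsClosed K)
    {δ : ℝ} (hδ : 0 < δ)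
    (L : List (Set X × Set X)) (hL : GoodList μ F K L)
    (hcov1 : lunion (L.map Prod.fst) = univ) (hcov2 : lunion (L.map Prod.snd) = univ) :
    ∃ L' : List (Set X × Set X), GoodList μ F K L' ∧
      (∀ q ∈ L', ∃ p ∈ L, q.1 ⊆ p.1 ∧ q.2 ⊆ p.2) ∧
      (∀ q ∈ L', Small δ q.1 ∧ Small δ q.2) ∧
      lunion (L'.map Prod.fst) = univ ∧ lunion (L'.map Prod.snd) = univ := by
  obtain ⟨L₁, hL₁good, hL₁ref, hc11, hc12⟩ :=
    refineAll μ hpos hcont hsc hF hFnd hK true hδ L hL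
  obtain ⟨L₂, hL₂good, hL₂ref, hc21, hc22⟩ :=
    refineAll μ hpos hcont hsc hF hFnd hK false hδ L₁ hL₁good
  refine ⟨L₂, hL₂good, ?_, ?_, ?_, ?_⟩
  · intro q hq
    obtain ⟨r, hr, h1, h2, -⟩ := hL₂ref q hq
    obtain ⟨s, hs, h3, h4, -⟩ := hL₁ref r hr
    exact ⟨s, hs, h1.trans h3, h2.trans h4⟩
  · intro q hq
    obtain ⟨r, hr, h1, h2, hsm2⟩ := hL₂ref q hq
    obtain ⟨s, hs, h3, h4, hsm1⟩ := hL₁ref r hr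
    simp only [Bool.true_eq, if_true, if_false, reduceIte] at hsm1 hsm2
    exact ⟨hsm1.mono h1, hsm2⟩
  · exact Set.eq_univ_of_univ_subset (hcov1 ▸ (hc11.trans hc21))
  · exact Set.eq_univ_of_univ_subset (hcov2 ▸ (hc12.trans hc22))

/-- The main construction: a measure-preserving homeomorphism pushing `K` over `F`. -/
lemma main_homeo [Nonempty X]
    (hpos : ∀ U : Set X, IsOpen U → U.Nonempty → 0 < μ U)
    (hcont : ∀ x : X, μ {x} = 0)
    (hsc : ∀ U V : Set X, IsClopen U → IsClopen V → μ U < μ V →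
      ∃ W, W ⊆ V ∧ IsClopen W ∧ μ W = μ U)
    {F K : Set X} (hF : IsClosed F) (hFnd : interior F = ∅) (hK : IsClosed K)
    (hroot : ν μ F < ν μ K) :
    ∃ h : X ≃ₜ X, (∀ S : Set X, MeasurableSet S → μ (h '' S) = μ S) ∧ F ⊆ h '' K := by
  classical
  set Pack : List (Set X × Set X) → Prop := fun L => GoodList μ F K L ∧
    lunion (L.map Prod.fst) = univ ∧ lunion (L.map Prod.snd) = univ with hPackdef
  have hpack₀ : Pack [((univ : Set X), (univ : Set X))] := by
    refine ⟨⟨?_, by simp, by simp⟩, by simp [lunion], by simp [lunion]⟩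
    intro p hp
    simp only [List.mem_singleton] at hp
    subst hp
    exact ⟨isClopen_univ, isClopen_univ, univ_nonempty, univ_nonempty, rfl,
      fun _ => by simpa using hroot⟩
  have hstep : ∀ (n : ℕ) (L : List (Set X × Set X)), Pack L →
      ∃ L', Pack L' ∧ (∀ q ∈ L', ∃ p ∈ L, q.1 ⊆ p.1 ∧ q.2 ⊆ p.2) ∧
        (∀ q ∈ L', Small ((2:ℝ)⁻¹ ^ n) q.1 ∧ Small ((2:ℝ)⁻¹ ^ n) q.2) := by
    intro n L hL
    obtain ⟨L', hgood, href, hsmall, hc1, hc2⟩ := refineMatching μ hpos hcont hsc hF hFnd hK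
      (δ := (2:ℝ)⁻¹ ^ n) (by positivity) L hL.1 hL.2.1 hL.2.2
    exact ⟨L', ⟨hgood, hc1, hc2⟩, href, hsmall⟩
  -- build the scheme
  let step : ∀ (n : ℕ), {L : List (Set X × Set X) // Pack L} → {L // Pack L} :=
    fun n t => ⟨(hstep n t.1 t.2).choose, (hstep n t.1 t.2).choose_spec.1⟩
  let Mr : ℕ → {L : List (Set X × Set X) // Pack L} :=
    fun n => Nat.rec ⟨[((univ : Set X), (univ : Set X))], hpack₀⟩ step n
  set M : ℕ → List (Set X × Set X) := fun n => (Mr n).1 with hMdef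
  have hpack : ∀ n, Pack (M n) := fun n => (Mr n).2
  have href : ∀ n, (∀ q ∈ M (n+1), ∃ p ∈ M n, q.1 ⊆ p.1 ∧ q.2 ⊆ p.2) ∧
      (∀ q ∈ M (n+1), Small ((2:ℝ)⁻¹ ^ n) q.1 ∧ Small ((2:ℝ)⁻¹ ^ n) q.2) :=
    fun n => (hstep n (M n) (hpack n)).choose_spec.2
  have hgp : ∀ n p, p ∈ M n → GoodPair μ F K p := fun n p hp => (hpack n).1.1 p hp
  -- piece selection
  have hex1 : ∀ (n : ℕ) (x : X), ∃ p : Set X × Set X, p ∈ M n ∧ x ∈ p.1 := by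
    intro n x
    have hx : x ∈ lunion ((M n).map Prod.fst) := by rw [(hpack n).2.1]; trivial
    rcases mem_lunion.1 hx with ⟨s, hs, hxs⟩
    rcases List.mem_map.1 hs with ⟨p, hp, rfl⟩
    exact ⟨p, hp, hxs⟩
  have hex2 : ∀ (n : ℕ) (y : X), ∃ p : Set X × Set X, p ∈ M n ∧ y ∈ p.2 := by
    intro n y
    have hy : y ∈ lunion ((M n).map Prod.snd) := by rw [(hpack n).2.2]; trivial
    rcases mem_lunion.1 hy with ⟨s, hs, hys⟩
    rcases List.mem_map.1 hs with ⟨p, hp, rfl⟩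
    exact ⟨p, hp, hys⟩
  choose pc hpc1 hpc2 using hex1
  choose qc hqc1 hqc2 using hex2
  -- uniqueness of pieces
  have huniq1 : ∀ (n : ℕ) (p q : Set X × Set X), p ∈ M n → q ∈ M n →
      ∀ x, x ∈ p.1 → x ∈ q.1 → p = q := by
    intro n p q hp hq x hxp hxq
    by_contra hne
    have hdisj := @List.Pairwise.forall _ _ _ ⟨fun a b h => h.symm⟩ ((hpack n).1.2.1)
      _ hp _ hq hne
    exact Set.disjoint_left.1 hdisj hxp hxq
  have huniq2 : ∀ (n : ℕ) (p q : Set X × Set X), p ∈ M n → q ∈ M n →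
      ∀ y, y ∈ p.2 → y ∈ q.2 → p = q := by
    intro n p q hp hq y hyp hyq
    by_contra hne
    have hdisj := @List.Pairwise.forall _ _ _ ⟨fun a b h => h.symm⟩ ((hpack n).1.2.2)
      _ hp _ hq hne
    exact Set.disjoint_left.1 hdisj hyp hyq
  -- nesting
  have hnest : ∀ (n : ℕ) (x : X), (pc (n+1) x).1 ⊆ (pc n x).1 ∧
      (pc (n+1) x).2 ⊆ (pc n x).2 := by
    intro n x
    obtain ⟨p, hp, h1, h2⟩ := (href n).1 (pc (n+1) x) (hpc1 (n+1) x)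
    have : p = pc n x := huniq1 n p (pc n x) hp (hpc1 n x) x (h1 (hpc2 (n+1) x)) (hpc2 n x)
    rw [← this]
    exact ⟨h1, h2⟩
  have hnestq : ∀ (n : ℕ) (y : X), (qc (n+1) y).1 ⊆ (qc n y).1 ∧
      (qc (n+1) y).2 ⊆ (qc n y).2 := by
    intro n y
    obtain ⟨p, hp, h1, h2⟩ := (href n).1 (qc (n+1) y) (hqc1 (n+1) y)
    have : p = qc n y := huniq2 n p (qc n y) hp (hqc1 n y) y (h2 (hqc2 (n+1) y)) (hqc2 n y)
    rw [← this]
    exact ⟨h1, h2⟩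
  -- smallness of pieces at level n+1
  have hsmall : ∀ (n : ℕ) (q : Set X × Set X), q ∈ M (n+1) →
      Small ((2:ℝ)⁻¹ ^ n) q.1 ∧ Small ((2:ℝ)⁻¹ ^ n) q.2 := fun n => (href n).2
  -- separation via shrinking diameters
  have htend : Filter.Tendsto (fun n : ℕ => ((2:ℝ)⁻¹) ^ n) Filter.atTop (nhds 0) :=
    tendsto_pow_atTop_nhds_zero_of_lt_one (by norm_num) (by norm_num)
  have hsep : ∀ y z : X, (∀ n : ℕ, ∃ s : Set X, y ∈ s ∧ z ∈ s ∧ Small ((2:ℝ)⁻¹ ^ n) s) →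
      y = z := by
    intro y z hyz
    have hd : ∀ n : ℕ, dist y z ≤ ((2:ℝ)⁻¹) ^ n := by
      intro n
      obtain ⟨s, hys, hzs, hsm⟩ := hyz n
      exact hsm y hys z hzs
    have : dist y z ≤ 0 := ge_of_tendsto' htend hd
    exact dist_le_zero.1 this
  -- the maps
  have hinter1 : ∀ x : X, ∃ y : X, ∀ n, y ∈ (pc n x).2 := by
    intro x
    have hne := IsCompact.nonempty_iInter_of_sequence_nonempty_isCompact_isClosed
      (fun n => (pc n x).2) (fun n => (hnest n x).2)
      (fun n => (hgp n _ (hpc1 n x)).2.2.2.1)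
      ((hgp 0 _ (hpc1 0 x)).2.1.1.isCompact)
      (fun n => (hgp n _ (hpc1 n x)).2.1.1)
    obtain ⟨y, hy⟩ := hne
    exact ⟨y, fun n => mem_iInter.1 hy n⟩
  have hinter2 : ∀ y : X, ∃ x : X, ∀ n, x ∈ (qc n y).1 := by
    intro y
    have hne := IsCompact.nonempty_iInter_of_sequence_nonempty_isCompact_isClosed
      (fun n => (qc n y).1) (fun n => (hnestq n y).1)
      (fun n => (hgp n _ (hqc1 n y)).2.2.1)
      ((hgp 0 _ (hqc1 0 y)).1.1.isCompact)
      (fun n => (hgp n _ (hqc1 n y)).1.1)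
    obtain ⟨x, hx⟩ := hne
    exact ⟨x, fun n => mem_iInter.1 hx n⟩
  choose h₀ hh₀ using hinter1
  choose g₀ hg₀ using hinter2
  -- h₀ and g₀ are mutually inverse
  have hqp : ∀ (n : ℕ) (x : X), qc n (h₀ x) = pc n x := by
    intro n x
    exact huniq2 n (qc n (h₀ x)) (pc n x) (hqc1 n (h₀ x)) (hpc1 n x) (h₀ x)
      (hqc2 n (h₀ x)) (hh₀ x n)
  have hpq : ∀ (n : ℕ) (y : X), pc n (g₀ y) = qc n y := by
    intro n y
    exact huniq1 n (pc n (g₀ y)) (qc n y) (hpc1 n (g₀ y)) (hqc1 n y) (g₀ y)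
      (hpc2 n (g₀ y)) (hg₀ y n)
  have hleft : Function.LeftInverse g₀ h₀ := by
    intro x
    apply hsep
    intro n
    refine ⟨(pc (n+1) x).1, ?_, hpc2 (n+1) x, (hsmall n _ (hpc1 (n+1) x)).1⟩
    have := hg₀ (h₀ x) (n+1)
    rwa [hqp (n+1) x] at this
  have hright : Function.RightInverse g₀ h₀ := by
    intro y
    apply hsep
    intro n
    refine ⟨(qc (n+1) y).2, ?_, hqc2 (n+1) y, (hsmall n _ (hqc1 (n+1) y)).2⟩
    have := hh₀ (g₀ y) (n+1)
    rwa [hpq (n+1) y] at this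
  set e : X ≃ X := ⟨h₀, g₀, hleft, hright⟩ with hedef
  -- continuity
  have hconth : Continuous h₀ := by
    rw [continuous_iff_continuousAt]
    intro x
    rw [ContinuousAt, Metric.tendsto_nhds]
    intro ε hε
    obtain ⟨n, hn⟩ := exists_pow_lt_of_lt_one hε (by norm_num : (2:ℝ)⁻¹ < 1)
    have hopen : IsOpen (pc (n+1) x).1 := (hgp (n+1) _ (hpc1 (n+1) x)).1.2
    filter_upwards [hopen.mem_nhds (hpc2 (n+1) x)] with x' hx'
    have heqp : pc (n+1) x' = pc (n+1) x :=
      huniq1 (n+1) _ _ (hpc1 (n+1) x') (hpc1 (n+1) x) x' (hpc2 (n+1) x') hx'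
    have h1 : h₀ x' ∈ (pc (n+1) x).2 := by rw [← heqp]; exact hh₀ x' (n+1)
    have h2 : h₀ x ∈ (pc (n+1) x).2 := hh₀ x (n+1)
    exact lt_of_le_of_lt ((hsmall n _ (hpc1 (n+1) x)).2 (h₀ x') h1 (h₀ x) h2) hn
  let h : X ≃ₜ X := Continuous.homeoOfEquivCompactToT2 (f := e) hconth
  have happ : ∀ x, h x = h₀ x := fun x => rfl
  -- preimages of pieces
  have hpre : ∀ (n : ℕ) (p : Set X × Set X), p ∈ M n → (⇑h) ⁻¹' p.2 = p.1 := by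
    intro n p hp
    ext x
    constructor
    · intro hx
      have : p = qc n (h₀ x) :=
        huniq2 n p (qc n (h₀ x)) hp (hqc1 n (h₀ x)) (h₀ x) hx (hqc2 n (h₀ x))
      rw [this, hqp n x]
      exact hpc2 n x
    · intro hx
      have : p = pc n x := huniq1 n p (pc n x) hp (hpc1 n x) x hx (hpc2 n x)
      show h₀ x ∈ p.2
      rw [this]
      exact hh₀ x n
  -- ancestors
  have hanc : ∀ (m n : ℕ), n ≤ m → ∀ q ∈ M m, ∃ p ∈ M n, q.1 ⊆ p.1 ∧ q.2 ⊆ p.2 := by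
    intro m n hnm
    induction m with
    | zero =>
      intro q hq
      have : n = 0 := Nat.le_zero.1 hnm
      subst this
      exact ⟨q, hq, subset_rfl, subset_rfl⟩
    | succ m ih =>
      intro q hq
      rcases Nat.lt_or_ge n (m+1) with hlt | hge
      · obtain ⟨r, hr, h1, h2⟩ := (href m).1 q hq
        obtain ⟨p, hp, h3, h4⟩ := ih (Nat.lt_succ_iff.1 hlt) r hr
        exact ⟨p, hp, h1.trans h3, h2.trans h4⟩
      · have : n = m + 1 := le_antisymm hnm hge
        subst this
        exact ⟨q, hq, subset_rfl, subset_rfl⟩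
  -- the pi-system of pieces
  have hpi : IsPiSystem {S : Set X | ∃ (n : ℕ) (p : Set X × Set X), p ∈ M n ∧ S = p.2} := by
    intro s hs t ht hst
    obtain ⟨n, p, hp, rfl⟩ := hs
    obtain ⟨m, q, hq, rfl⟩ := ht
    obtain ⟨y, hy⟩ := hst
    rcases le_total n m with hnm | hmn
    · obtain ⟨r, hr, -, h2⟩ := hanc m n hnm q hq
      have hrp : r = p := huniq2 n r p hr hp y (h2 hy.2) hy.1
      have h2' : q.2 ⊆ p.2 := hrp ▸ h2
      rw [inter_eq_self_of_subset_right h2']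
      exact ⟨m, q, hq, rfl⟩
    · obtain ⟨r, hr, -, h2⟩ := hanc n m hmn p hp
      have hrq : r = q := huniq2 m r q hr hq y (h2 hy.1) hy.2
      have h2' : p.2 ⊆ q.2 := hrq ▸ h2
      rw [inter_eq_self_of_subset_left h2']
      exact ⟨n, p, hp, rfl⟩
  -- pieces generate the Borel σ-algebra
  have hgen : (inferInstance : MeasurableSpace X) = MeasurableSpace.generateFrom
      {S : Set X | ∃ (n : ℕ) (p : Set X × Set X), p ∈ M n ∧ S = p.2} := by
    apply le_antisymm
    · rw [BorelSpace.measurable_eq (α := X)]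
      apply MeasurableSpace.generateFrom_le
      intro U hU
      have hUeq : U = ⋃ (n : ℕ), ⋃₀ {s | ∃ p : Set X × Set X,
          (p ∈ M (n+1) ∧ p.2 ⊆ U) ∧ s = p.2} := by
        apply Set.Subset.antisymm
        · intro x hx
          obtain ⟨ε, hε, hball⟩ := Metric.isOpen_iff.1 hU x hx
          obtain ⟨n, hn⟩ := exists_pow_lt_of_lt_one hε (by norm_num : (2:ℝ)⁻¹ < 1)
          refine mem_iUnion.2 ⟨n, ?_⟩
          refine ⟨(qc (n+1) x).2, ⟨qc (n+1) x, ⟨hqc1 (n+1) x, ?_⟩, rfl⟩, hqc2 (n+1) x⟩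
          intro z hz
          apply hball
          rw [Metric.mem_ball]
          exact lt_of_le_of_lt
            ((hsmall n _ (hqc1 (n+1) x)).2 z hz x (hqc2 (n+1) x)) hn
        · intro x hx
          obtain ⟨n, hn⟩ := mem_iUnion.1 hx
          obtain ⟨s, ⟨p, ⟨-, hsub⟩, rfl⟩, hxs⟩ := hn
          exact hsub hxs
      rw [hUeq]
      apply MeasurableSet.iUnion
      intro n
      apply MeasurableSet.sUnion
      · apply Set.Countable.mono ?_ (((M (n+1)).map Prod.snd).finite_toSet.countable)
        rintro s ⟨p, ⟨hp, -⟩, rfl⟩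
        exact List.mem_map.2 ⟨p, hp, rfl⟩
      · rintro s ⟨p, ⟨hp, -⟩, rfl⟩
        exact MeasurableSpace.measurableSet_generateFrom ⟨n+1, p, hp, rfl⟩
    · apply MeasurableSpace.generateFrom_le
      rintro s ⟨n, p, hp, rfl⟩
      exact (hgp n p hp).2.1.1.measurableSet
  -- measure preservation
  have hmeash : Measurable (⇑h) := h.continuous.measurable
  have hmap : μ = Measure.map (⇑h) μ := by
    apply MeasureTheory.ext_of_generate_finite _ hgen hpi
    · rintro s ⟨n, p, hp, rfl⟩
      rw [Measure.map_apply hmeash (hgp n p hp).2.1.1.measurableSet, hpre n p hp]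
      exact (mu_eq_of_ν_eq μ (hgp n p hp).2.2.2.2.1).symm
    · rw [Measure.map_apply hmeash MeasurableSet.univ]
      simp
  have hmaps : Measure.map (⇑h.symm) μ = μ := by
    have hmeashs : Measurable (⇑h.symm) := h.symm.continuous.measurable
    calc Measure.map (⇑h.symm) μ = Measure.map (⇑h.symm) (Measure.map (⇑h) μ) := by
          rw [← hmap]
      _ = Measure.map (⇑h.symm ∘ ⇑h) μ := Measure.map_map hmeashs hmeash
      _ = Measure.map id μ := by
          congr 1
          funext x
          exact h.symm_apply_apply x
      _ = μ := Measure.map_id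
  refine ⟨h, ?_, ?_⟩
  · intro S hS
    have himg : h '' S = ⇑h.symm ⁻¹' S := (congrFun (Homeomorph.preimage_symm h) S).symm
    rw [himg, ← Measure.map_apply h.symm.continuous.measurable hS, hmaps]
  · intro y hyF
    set x := g₀ y with hxdef
    have hhx : h x = y := hright y
    have hxK : x ∈ K := by
      rw [← hK.closure_eq]
      rw [Metric.mem_closure_iff]
      intro ε hε
      obtain ⟨n, hn⟩ := exists_pow_lt_of_lt_one hε (by norm_num : (2:ℝ)⁻¹ < 1)
      set p := pc (n+1) x with hpdef
      have hyp2 : y ∈ p.2 := by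
        have := hh₀ x (n+1)
        rwa [show h₀ x = y from hhx] at this
      have hFne : (F ∩ p.2).Nonempty := ⟨y, hyF, hyp2⟩
      have hinv := (hgp (n+1) p (hpc1 (n+1) x)).2.2.2.2.2 hFne
      have hKpos : 0 < ν μ (K ∩ p.1) := lt_of_le_of_lt (ν_nonneg μ _) hinv
      obtain ⟨k, hkK, hkp⟩ := nonempty_of_ν_pos μ hKpos
      refine ⟨k, hkK, ?_⟩
      exact lt_of_le_of_lt
        ((hsmall n _ (hpc1 (n+1) x)).1 x (hpc2 (n+1) x) k hkp) hn
    exact ⟨x, hxK, hhx⟩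

/-- master lemma, in the metric setting -/
lemma master (μ : Measure X) [IsFiniteMeasure μ]
    (hcont : ∀ x : X, μ {x} = 0)
    (hpos : ∀ U : Set X, IsOpen U → U.Nonempty → 0 < μ U)
    (hsc : ∀ U V : Set X, IsClopen U → IsClopen V → μ U < μ V →
      ∃ W, W ⊆ V ∧ IsClopen W ∧ μ W = μ U)
    (I : Set (Set X))
    (hdown : ∀ A ∈ I, ∀ B : Set X, B ⊆ A → B ∈ I)
    (hcup : ∀ A ∈ I, ∀ B ∈ I, A ∪ B ∈ I)
    (hinv : ∀ h : X ≃ₜ X, (∀ S : Set X, MeasurableSet S → μ (h '' S) = μ S) →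
      ∀ A ∈ I, h '' A ∈ I)
    (hbase : ∀ A ∈ I, ∃ B ∈ I, A ⊆ B ∧ MeasurableSet B)
    (hbig : ∃ A ∈ I, 0 < μ A) :
    ∀ N : Set X, IsNowhereDense N → N ∈ I := by
  intro N hN
  obtain ⟨A, hAI, hApos⟩ := hbig
  rcases isEmpty_or_nonempty X with hX | hX
  · have : N = ∅ := Set.eq_empty_of_isEmpty N
    exact this ▸ hdown A hAI ∅ (empty_subset A)
  obtain ⟨B, hBI, hAB, hBmeas⟩ := hbase A hAI
  have hBpos : 0 < μ B := lt_of_lt_of_le hApos (measure_mono hAB)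
  have hhalf : (μ B / 2) ≠ 0 := (ENNReal.half_pos hBpos.ne').ne'
  obtain ⟨K, hKB, hKclosed, hKlt⟩ :=
    hBmeas.exists_isClosed_lt_add (μ := μ) (measure_ne_top μ B) hhalf
  have hKpos0 : μ K ≠ 0 := by
    intro h0
    rw [h0, zero_add] at hKlt
    exact absurd (lt_of_lt_of_le hKlt (ENNReal.half_le_self)) (lt_irrefl _)
  have hKpos : 0 < ν μ K := by
    rw [ν, ENNReal.toReal_pos_iff]
    exact ⟨pos_iff_ne_zero.2 hKpos0, (measure_ne_top μ K).lt_top⟩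
  have hKI : K ∈ I := hdown B hBI K hKB
  obtain ⟨L, hLmem, hLdisj, hLun⟩ :=
    fine_partition μ hcont isClopen_univ one_pos hKpos
  have hpieces : ∀ V ∈ L, closure N ∩ V ∈ I := by
    intro V hV
    obtain ⟨hVcl, hVne, -, -, hVν⟩ := hLmem V hV
    have hFVclosed : IsClosed (closure N ∩ V) := isClosed_closure.inter hVcl.1
    have hFVnd : interior (closure N ∩ V) = ∅ := by
      apply Set.eq_empty_of_subset_empty
      rw [← hN]
      exact interior_mono inter_subset_left
    have hroot : ν μ (closure N ∩ V) < ν μ K :=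
      lt_of_le_of_lt (ν_mono μ inter_subset_right) hVν
    obtain ⟨h, hhpres, hhsub⟩ :=
      main_homeo μ hpos hcont hsc hFVclosed hFVnd hKclosed hroot
    exact hdown _ (hinv h hhpres K hKI) _ hhsub
  have hcomb : ∀ L' : List (Set X), (∀ V ∈ L', closure N ∩ V ∈ I) →
      closure N ∩ lunion L' ∈ I := by
    intro L'
    induction L' with
    | nil =>
      intro _
      simpa using hdown A hAI ∅ (empty_subset A)
    | cons V L' ih =>
      intro hmem
      rw [lunion_cons, Set.inter_union_distrib_left]
      exact hcup _ (hmem V (by simp)) _ (ih fun V' hV' => hmem V' (by simp [hV']))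
  have hFI : closure N ∈ I := by
    have := hcomb L hpieces
    rwa [hLun, inter_univ] at this
  exact hdown (closure N) hFI N subset_closure

end Stmt12Aux

/-- An invariant ideal with measurable base containing a set of positive measure
contains every nowhere dense set. -/
theorem stmt12 {X : Type*} [TopologicalSpace X] [CompactSpace X] [T2Space X]
    [TopologicalSpace.MetrizableSpace X] [TotallyDisconnectedSpace X]
    [MeasurableSpace X] [BorelSpace X]
    (μ : MeasureTheory.Measure X) [MeasureTheory.IsFiniteMeasure μ]
    (hperf : ∀ x : X, ¬ IsOpen ({x} : Set X))
    (hcont : ∀ x : X, μ {x} = 0)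
    (hpos : ∀ U : Set X, IsOpen U → U.Nonempty → 0 < μ U)
    (hsc : ∀ U V : Set X, IsClopen U → IsClopen V → μ U < μ V →
      ∃ W, W ⊆ V ∧ IsClopen W ∧ μ W = μ U)
    (I : Set (Set X))
    (hdown : ∀ A ∈ I, ∀ B : Set X, B ⊆ A → B ∈ I)
    (hcup : ∀ A ∈ I, ∀ B ∈ I, A ∪ B ∈ I)
    (hinv : ∀ h : X ≃ₜ X, (∀ S : Set X, MeasurableSet S → μ (h '' S) = μ S) →
      ∀ A ∈ I, h '' A ∈ I)
    (hbase : ∀ A ∈ I, ∃ B ∈ I, A ⊆ B ∧ MeasurableSet B)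
    (hbig : ∃ A ∈ I, 0 < μ A) :
    ∀ N : Set X, IsNowhereDense N → N ∈ I := by
  letI : MetricSpace X := TopologicalSpace.metrizableSpaceMetric X
  exact Stmt12Aux.master μ hcont hpos hsc I hdown hcup hinv hbase hbig
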